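/- Let F be a field of characteristic zero, let G = {1, h, h²} be the cyclic group of order 3, and let P = {p₁, p₂, p₃, p₄} be the partially ordered set whose only strict order relations are p₁ ≤ p₄, p₂ ≤ p₃, p₂ ≤ p₄. Let θ, μ : P → G be given by θ = (1, h, h², 1) and μ = (1, h², h, 1) (values at p₁, p₂, p₃, p₄ respectively). Then the elementary graded algebras A^θ and A^μ on I(P,F) satisfy the same G-graded polynomial identities, T_G(A^θ) = T_G(A^μ), yet there is no F-algebra automorphism φ of I(P,F) with φ(A^θ(g)) = A^μ(g) for all g ∈ G; that is, A^θ and A^μ are not isomorphic as G-graded algebras. -/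

import Mathlib

/-- `A^θ(g)`: the `F`-subspace of the incidence algebra `I(P,F)` consisting of the functions
`f` with `f x y = 0` whenever `x ≤ y` and `(θ x)⁻¹ * θ y ≠ g`. -/
def elemSubspace (F : Type*) [Field F] {α : Type*} [PartialOrder α] [LocallyFiniteOrder α]
    {G : Type*} [Group G] (θ : α → G) (g : G) :
    Submodule F (IncidenceAlgebra F α) where
  carrier := {f | ∀ x y : α, x ≤ y → (θ x)⁻¹ * θ y ≠ g → f x y = 0}
  zero_mem' := by intro x y _ _; rfl
  add_mem' := by
    intro f₁ f₂ h₁ h₂ x y hxy hg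
    show (f₁ + f₂) x y = 0
    rw [IncidenceAlgebra.add_apply, h₁ x y hxy hg, h₂ x y hxy hg, add_zero]
  smul_mem' := by
    intro c f hf x y hxy hg
    show (c • f) x y = 0
    rw [IncidenceAlgebra.constSMul_apply, hf x y hxy hg, smul_zero]


/-- `Φ`, an element of the free algebra over `F` on the variables `x_i^g` (`i ∈ ℕ`, `g ∈ G`),
is a `G`-graded polynomial identity of the algebra `A` graded by the family of subspaces
`Asub : G → Submodule F A` if `Φ` vanishes under every substitution sending each variable
`x_i^g` to an element of `Asub g`. -/
def IsGradedPI {F A G : Type*} [Field F] [Ring A] [Algebra F A]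
    (Asub : G → Submodule F A) (Phi : FreeAlgebra F (ℕ × G)) : Prop :=
  ∀ v : ℕ × G → A, (∀ p : ℕ × G, v p ∈ Asub p.2) → FreeAlgebra.lift F v Phi = 0

/-- The four-element poset `P = {p₁, p₂, p₃, p₄}` whose only strict relations are
`p₁ ≤ p₄`, `p₂ ≤ p₃` and `p₂ ≤ p₄`. -/
inductive P4 : Type
  | p1 | p2 | p3 | p4
  deriving DecidableEq

instance : Fintype P4 :=
  ⟨{.p1, .p2, .p3, .p4}, fun x => by cases x <;> simp⟩

/-- The order relation of `P4` (as a Boolean-valued function). -/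
def P4.ble : P4 → P4 → Bool
  | .p1, .p1 => true
  | .p2, .p2 => true
  | .p3, .p3 => true
  | .p4, .p4 => true
  | .p1, .p4 => true
  | .p2, .p3 => true
  | .p2, .p4 => true
  | _, _ => false

instance : LE P4 := ⟨fun a b => P4.ble a b = true⟩

instance : DecidableRel (α := P4) (· ≤ ·) :=
  fun a b => inferInstanceAs (Decidable (P4.ble a b = true))

instance : PartialOrder P4 where
  le := (· ≤ ·)
  le_refl := by decide
  le_trans := by decide
  le_antisymm := by decide

instance : DecidableRel (α := P4) (· < ·) :=
  fun _ _ => decidable_of_iff _ lt_iff_le_not_ge.symm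

instance : LocallyFiniteOrder P4 := Fintype.toLocallyFiniteOrder

/-- The generator `h` of the cyclic group of order `3`, realized as `Multiplicative (ZMod 3)`. -/
def hgen : Multiplicative (ZMod 3) := Multiplicative.ofAdd 1

/-- The grading function `θ = (1, h, h², 1)`. -/
def theta4 : P4 → Multiplicative (ZMod 3)
  | .p1 => 1
  | .p2 => hgen
  | .p3 => hgen ^ 2
  | .p4 => 1

/-- The grading function `μ = (1, h², h, 1)`. -/
def mu4 : P4 → Multiplicative (ZMod 3)
  | .p1 => 1
  | .p2 => hgen ^ 2
  | .p3 => hgen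
  | .p4 => 1
namespace P4aux

open Finset IncidenceAlgebra

lemma P4.sum_univ {M : Type*} [AddCommMonoid M] (h : P4 → M) :
    ∑ z : P4, h z = h .p1 + h .p2 + h .p3 + h .p4 := by
  show _ + (_ + (_ + (_ + 0))) = _
  rw [add_zero, add_assoc, add_assoc]

lemma mul_apply4 {F : Type*} [Field F] (f g : IncidenceAlgebra F P4) (a b : P4) :
    (f * g) a b = ∑ z : P4, if a ≤ z ∧ z ≤ b then f a z * g z b else 0 := by
  rw [IncidenceAlgebra.mul_apply, ← Finset.sum_filter]
  congr 1
  ext z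
  simp [Finset.mem_Icc, Finset.mem_filter]

lemma ia_zero {F : Type*} [Field F] (f : IncidenceAlgebra F P4) (x y : P4)
    (h : ¬ x ≤ y) : f x y = 0 :=
  IncidenceAlgebra.apply_eq_zero_of_not_le h f

variable {F : Type*} [Field F]

lemma mem_elem {α G : Type*} [PartialOrder α] [LocallyFiniteOrder α] [Group G]
    (θ : α → G) (g : G) (f : IncidenceAlgebra F α) :
    f ∈ elemSubspace F θ g ↔ ∀ x y : α, x ≤ y → (θ x)⁻¹ * θ y ≠ g → f x y = 0 :=
  Iff.rfl

def swap34 : P4 → P4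
  | .p1 => .p1
  | .p2 => .p2
  | .p3 => .p4
  | .p4 => .p3

def psi1fun (f : IncidenceAlgebra F P4) : IncidenceAlgebra F P4 :=
  ⟨fun x y => if x ≤ y then f (swap34 x) (swap34 y) else 0, fun _ _ h => if_neg h⟩

lemma psi1fun_apply (f : IncidenceAlgebra F P4) (x y : P4) :
    psi1fun f x y = if x ≤ y then f (swap34 x) (swap34 y) else 0 := rfl

def psi2fun (f : IncidenceAlgebra F P4) : IncidenceAlgebra F P4 :=
  ⟨fun x y => if x = P4.p2 ∧ (y = P4.p3 ∨ y = P4.p4) then 0 else f x y, fun x y h => by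
    split
    · rfl
    · exact ia_zero f x y h⟩

lemma psi2fun_apply (f : IncidenceAlgebra F P4) (x y : P4) :
    psi2fun f x y = if x = P4.p2 ∧ (y = P4.p3 ∨ y = P4.p4) then 0 else f x y := rfl

def psi1lin : IncidenceAlgebra F P4 →ₗ[F] IncidenceAlgebra F P4 where
  toFun := psi1fun
  map_add' f g := by
    ext a b hab
    simp [psi1fun_apply, hab, IncidenceAlgebra.add_apply]
  map_smul' c f := by
    ext a b hab
    simp [psi1fun_apply, hab, IncidenceAlgebra.constSMul_apply]

def psi2lin : IncidenceAlgebra F P4 →ₗ[F] IncidenceAlgebra F P4 where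
  toFun := psi2fun
  map_add' f g := by
    ext a b hab
    by_cases hc : a = P4.p2 ∧ (b = P4.p3 ∨ b = P4.p4) <;>
      simp [psi2fun_apply, hc, IncidenceAlgebra.add_apply]
  map_smul' c f := by
    ext a b hab
    by_cases hc : a = P4.p2 ∧ (b = P4.p3 ∨ b = P4.p4) <;>
      simp [psi2fun_apply, hc, IncidenceAlgebra.constSMul_apply]

def psi1 : IncidenceAlgebra F P4 →ₐ[F] IncidenceAlgebra F P4 :=
  AlgHom.ofLinearMap psi1lin
    (by
      ext a b hab
      cases a <;> cases b <;>
        first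
          | exact absurd hab (by decide)
          | simp +decide [psi1lin, psi1fun_apply, swap34, IncidenceAlgebra.one_apply])
    (by
      intro f g
      ext a b hab
      cases a <;> cases b <;>
        first
          | exact absurd hab (by decide)
          | (simp only [psi1lin, LinearMap.coe_mk, AddHom.coe_mk];
             simp only [psi1fun_apply, mul_apply4, P4.sum_univ];
             simp +decide [swap34, ia_zero]))

def psi2 : IncidenceAlgebra F P4 →ₐ[F] IncidenceAlgebra F P4 :=
  AlgHom.ofLinearMap psi2lin
    (by
      ext a b hab
      cases a <;> cases b <;>
        first
          | exact absurd hab (by decide)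
          | simp +decide [psi2lin, psi2fun_apply, IncidenceAlgebra.one_apply])
    (by
      intro f g
      ext a b hab
      cases a <;> cases b <;>
        first
          | exact absurd hab (by decide)
          | (simp only [psi2lin, LinearMap.coe_mk, AddHom.coe_mk];
             simp only [psi2fun_apply, mul_apply4, P4.sum_univ];
             simp +decide [ia_zero]))

end P4aux

namespace P4aux

variable {F : Type*} [Field F]

lemma appEq {f g : IncidenceAlgebra F P4} (h : f = g) (x y : P4) : f x y = g x y := by rw [h]

lemma app0 {f : IncidenceAlgebra F P4} (h : f = 0) (x y : P4) : f x y = 0 := by rw [h]; rfl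

lemma psi1_mu_theta (g : Multiplicative (ZMod 3)) (f : IncidenceAlgebra F P4)
    (hf : f ∈ elemSubspace F mu4 g) : psi1fun f ∈ elemSubspace F theta4 g := by
  have hf' : ∀ x y : P4, x ≤ y → (mu4 x)⁻¹ * mu4 y ≠ g → f x y = 0 := hf
  intro x y hxy hg
  cases x <;> cases y <;>
    first
      | exact absurd hxy (by decide)
      | (rw [psi1fun_apply, if_pos (by decide)];
         first
           | exact ia_zero f _ _ (by decide)
           | exact hf' _ _ (by decide) fun hh => hg (by rw [← hh]; decide))

lemma psi1_theta_mu (g : Multiplicative (ZMod 3)) (f : IncidenceAlgebra F P4)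
    (hf : f ∈ elemSubspace F theta4 g) : psi1fun f ∈ elemSubspace F mu4 g := by
  have hf' : ∀ x y : P4, x ≤ y → (theta4 x)⁻¹ * theta4 y ≠ g → f x y = 0 := hf
  intro x y hxy hg
  cases x <;> cases y <;>
    first
      | exact absurd hxy (by decide)
      | (rw [psi1fun_apply, if_pos (by decide)];
         first
           | exact ia_zero f _ _ (by decide)
           | exact hf' _ _ (by decide) fun hh => hg (by rw [← hh]; decide))

lemma psi2_mu_theta (g : Multiplicative (ZMod 3)) (f : IncidenceAlgebra F P4)
    (hf : f ∈ elemSubspace F mu4 g) : psi2fun f ∈ elemSubspace F theta4 g := by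
  have hf' : ∀ x y : P4, x ≤ y → (mu4 x)⁻¹ * mu4 y ≠ g → f x y = 0 := hf
  intro x y hxy hg
  cases x <;> cases y <;>
    first
      | exact absurd hxy (by decide)
      | rw [psi2fun_apply, if_pos (by decide)]
      | (rw [psi2fun_apply, if_neg (by decide)];
         exact hf' _ _ (by decide) fun hh => hg (by rw [← hh]; decide))

lemma psi2_theta_mu (g : Multiplicative (ZMod 3)) (f : IncidenceAlgebra F P4)
    (hf : f ∈ elemSubspace F theta4 g) : psi2fun f ∈ elemSubspace F mu4 g := by
  have hf' : ∀ x y : P4, x ≤ y → (theta4 x)⁻¹ * theta4 y ≠ g → f x y = 0 := hf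
  intro x y hxy hg
  cases x <;> cases y <;>
    first
      | exact absurd hxy (by decide)
      | rw [psi2fun_apply, if_pos (by decide)]
      | (rw [psi2fun_apply, if_neg (by decide)];
         exact hf' _ _ (by decide) fun hh => hg (by rw [← hh]; decide))

lemma joint_inj (f : IncidenceAlgebra F P4) (h1 : psi1fun f = 0) (h2 : psi2fun f = 0) :
    f = 0 := by
  have h1' : ∀ x y, psi1fun f x y = 0 := app0 h1
  have h2' : ∀ x y, psi2fun f x y = 0 := app0 h2
  have e23 : f P4.p2 P4.p3 = 0 := by
    have h := h1' P4.p2 P4.p4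
    rwa [psi1fun_apply, if_pos (by decide)] at h
  have e24 : f P4.p2 P4.p4 = 0 := by
    have h := h1' P4.p2 P4.p3
    rwa [psi1fun_apply, if_pos (by decide)] at h
  have hrest : ∀ x y, ¬(x = P4.p2 ∧ (y = P4.p3 ∨ y = P4.p4)) → f x y = 0 := by
    intro x y hc
    have h := h2' x y
    rwa [psi2fun_apply, if_neg hc] at h
  ext x y hxy
  rw [IncidenceAlgebra.zero_apply]
  cases x <;> cases y <;>
    first
      | exact absurd hxy (by decide)
      | exact e23
      | exact e24
      | exact hrest _ _ (by decide)

lemma pi_transfer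
    {Asub Bsub : Multiplicative (ZMod 3) → Submodule F (IncidenceAlgebra F P4)}
    (h1 : ∀ g f, f ∈ Bsub g → psi1fun f ∈ Asub g)
    (h2 : ∀ g f, f ∈ Bsub g → psi2fun f ∈ Asub g)
    {Phi : FreeAlgebra F (ℕ × Multiplicative (ZMod 3))}
    (hPhi : IsGradedPI Asub Phi) : IsGradedPI Bsub Phi := by
  intro v hv
  have key : ∀ ψ : IncidenceAlgebra F P4 →ₐ[F] IncidenceAlgebra F P4,
      (∀ p : ℕ × Multiplicative (ZMod 3), ψ (v p) ∈ Asub p.2) →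
      ψ (FreeAlgebra.lift F v Phi) = 0 := by
    intro ψ hψ
    have hcomp : ψ.comp (FreeAlgebra.lift F v) = FreeAlgebra.lift F (fun p => ψ (v p)) :=
      FreeAlgebra.hom_ext (funext fun p => by simp)
    calc ψ (FreeAlgebra.lift F v Phi)
        = FreeAlgebra.lift F (fun p => ψ (v p)) Phi := DFunLike.congr_fun hcomp Phi
      _ = 0 := hPhi _ hψ
  exact joint_inj _ (key psi1 fun p => h1 _ _ (hv p)) (key psi2 fun p => h2 _ _ (hv p))

/-- The element of the incidence algebra supported at a single pair `(a, b)` with value `1`. -/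
def sing (F : Type*) [Field F] (a b : P4) : IncidenceAlgebra F P4 :=
  ⟨fun x y => if x = a ∧ y = b ∧ a ≤ b then 1 else 0, by
    intro x y h
    rw [if_neg]
    rintro ⟨rfl, rfl, hab⟩
    exact h hab⟩

lemma sing_apply (a b x y : P4) :
    sing F a b x y = if x = a ∧ y = b ∧ a ≤ b then 1 else 0 := rfl

end P4aux

namespace P4aux

variable {F : Type*} [Field F]

lemma sing_mem_theta_one14 : sing F P4.p1 P4.p4 ∈ elemSubspace F theta4 1 := by
  intro x y hxy hg
  cases x <;> cases y <;>
    first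
      | exact absurd hxy (by decide)
      | exact absurd (by decide) hg
      | rw [sing_apply, if_neg (by decide)]

lemma sing_mem_theta_hgen23 : sing F P4.p2 P4.p3 ∈ elemSubspace F theta4 hgen := by
  intro x y hxy hg
  cases x <;> cases y <;>
    first
      | exact absurd hxy (by decide)
      | exact absurd (by decide) hg
      | rw [sing_apply, if_neg (by decide)]

lemma sing_mem_theta_one44 : sing F P4.p4 P4.p4 ∈ elemSubspace F theta4 1 := by
  intro x y hxy hg
  cases x <;> cases y <;>
    first
      | exact absurd hxy (by decide)
      | exact absurd (by decide) hg
      | rw [sing_apply, if_neg (by decide)]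

lemma sing14_sq : (sing F P4.p1 P4.p4) * (sing F P4.p1 P4.p4) = 0 := by
  ext a b _
  rw [mul_apply4, P4.sum_univ, IncidenceAlgebra.zero_apply]
  cases a <;> cases b <;> simp +decide [sing_apply]

lemma sing23_mul_sing44 : (sing F P4.p2 P4.p3) * (sing F P4.p4 P4.p4) = 0 := by
  ext a b _
  rw [mul_apply4, P4.sum_univ, IncidenceAlgebra.zero_apply]
  cases a <;> cases b <;> simp +decide [sing_apply]

lemma sing14_mul_sing44 : (sing F P4.p1 P4.p4) * (sing F P4.p4 P4.p4) = sing F P4.p1 P4.p4 := by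
  ext a b _
  rw [mul_apply4, P4.sum_univ]
  cases a <;> cases b <;> simp +decide [sing_apply]

lemma no_graded_iso :
    ¬∃ φ : IncidenceAlgebra F P4 ≃ₐ[F] IncidenceAlgebra F P4,
        ∀ g : Multiplicative (ZMod 3),
          (elemSubspace F theta4 g).map φ.toLinearMap = elemSubspace F mu4 g := by
  rintro ⟨φ, hφ⟩
  have hmap : ∀ (g : Multiplicative (ZMod 3)) (f : IncidenceAlgebra F P4),
      f ∈ elemSubspace F theta4 g → φ f ∈ elemSubspace F mu4 g := by
    intro g f hf
    rw [← hφ g]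
    exact ⟨f, hf, rfl⟩
  have hM : ∀ x y : P4, x ≤ y → (mu4 x)⁻¹ * mu4 y ≠ 1 →
      φ (sing F P4.p1 P4.p4) x y = 0 := hmap 1 _ sing_mem_theta_one14
  have hC : ∀ x y : P4, x ≤ y → (mu4 x)⁻¹ * mu4 y ≠ hgen →
      φ (sing F P4.p2 P4.p3) x y = 0 := hmap hgen _ sing_mem_theta_hgen23
  -- the (2,4) entry of `φ e23` is nonzero
  have hCne : φ (sing F P4.p2 P4.p3) P4.p2 P4.p4 ≠ 0 := by
    intro h0
    have hz : φ (sing F P4.p2 P4.p3) = 0 := by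
      ext x y hxy
      rw [IncidenceAlgebra.zero_apply]
      cases x <;> cases y <;>
        first
          | exact absurd hxy (by decide)
          | exact h0
          | exact hC _ _ (by decide) (by decide)
    have hs : sing F P4.p2 P4.p3 = (0 : IncidenceAlgebra F P4) :=
      φ.injective (by rw [hz, map_zero])
    have h1 : sing F P4.p2 P4.p3 P4.p2 P4.p3 = (1 : F) := by
      rw [sing_apply, if_pos (by decide)]
    rw [hs, IncidenceAlgebra.zero_apply] at h1
    exact one_ne_zero h1.symm
  -- `φ e4` has vanishing (4,4) entry
  have hC22 : φ (sing F P4.p2 P4.p3) P4.p2 P4.p2 = 0 := hC _ _ (by decide) (by decide)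
  have hE44 : φ (sing F P4.p4 P4.p4) P4.p4 P4.p4 = 0 := by
    have hCE : φ (sing F P4.p2 P4.p3) * φ (sing F P4.p4 P4.p4) = 0 := by
      rw [← map_mul, sing23_mul_sing44, map_zero]
    have h24 := app0 hCE P4.p2 P4.p4
    rw [mul_apply4, P4.sum_univ] at h24
    simp +decide [hC22] at h24
    rcases h24 with h | h
    · exact absurd h hCne
    · exact h
  -- diagonal of `φ e14` vanishes
  have hMsq : φ (sing F P4.p1 P4.p4) * φ (sing F P4.p1 P4.p4) = 0 := by
    rw [← map_mul, sing14_sq, map_zero]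
  have hMdiag : ∀ x, φ (sing F P4.p1 P4.p4) x x = 0 := by
    intro x
    have h := app0 hMsq x x
    rw [mul_apply4, P4.sum_univ] at h
    cases x <;> simpa +decide [mul_self_eq_zero] using h
  -- the (1,4) entry of `φ e14` vanishes
  have hM14 : φ (sing F P4.p1 P4.p4) P4.p1 P4.p4 = 0 := by
    have hME : φ (sing F P4.p1 P4.p4) * φ (sing F P4.p4 P4.p4) = φ (sing F P4.p1 P4.p4) := by
      rw [← map_mul, sing14_mul_sing44]
    have h := appEq hME P4.p1 P4.p4
    rw [mul_apply4, P4.sum_univ] at h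
    simp +decide [hMdiag, hE44] at h
    exact h.symm
  -- hence `φ e14 = 0`, contradicting injectivity
  have hz : φ (sing F P4.p1 P4.p4) = 0 := by
    ext x y hxy
    rw [IncidenceAlgebra.zero_apply]
    cases x <;> cases y <;>
      first
        | exact absurd hxy (by decide)
        | exact hMdiag _
        | exact hM14
        | exact hM _ _ (by decide) (by decide)
  have hs : sing F P4.p1 P4.p4 = (0 : IncidenceAlgebra F P4) :=
    φ.injective (by rw [hz, map_zero])
  have h1 : sing F P4.p1 P4.p4 P4.p1 P4.p4 = (1 : F) := by
    rw [sing_apply, if_pos (by decide)]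
  rw [hs, IncidenceAlgebra.zero_apply] at h1
  exact one_ne_zero h1.symm

end P4aux

/-- over a field `F` of characteristic zero, with `G` the cyclic group of order
three and `P = P4` as above, the elementary gradings `A^θ` and `A^μ` determined by
`θ = (1, h, h², 1)` and `μ = (1, h², h, 1)` satisfy the same `G`-graded polynomial identities,
yet they are not isomorphic as `G`-graded algebras. -/
theorem theta4_mu4_samePI_not_gradedIso (F : Type*) [Field F] [CharZero F] :
    (∀ Phi : FreeAlgebra F (ℕ × Multiplicative (ZMod 3)),
        IsGradedPI (elemSubspace F theta4) Phi ↔ IsGradedPI (elemSubspace F mu4) Phi) ∧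
      ¬∃ φ : IncidenceAlgebra F P4 ≃ₐ[F] IncidenceAlgebra F P4,
          ∀ g : Multiplicative (ZMod 3),
            (elemSubspace F theta4 g).map φ.toLinearMap = elemSubspace F mu4 g := by
  refine ⟨fun Phi => ⟨fun h => ?_, fun h => ?_⟩, P4aux.no_graded_iso⟩
  · exact P4aux.pi_transfer P4aux.psi1_mu_theta P4aux.psi2_mu_theta h
  · exact P4aux.pi_transfer P4aux.psi1_theta_mu P4aux.psi2_theta_mu h
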